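/- Counting lemma: Fix m, d ≥ 1 and 0 < ℓ ≤ m, and fix a set of ℓ access positions 1 ≤ i_1 < ... < i_ℓ ≤ m in a text window of length m + d. Let P_m(ℓ) be the set of permutations p of [m] such that for every shift j ∈ {0,...,d} there exist positions k, k' ∈ B_j = {b ∈ [m] : j + b = i_t for some t} with p_k > p_{k'} while the text has t_{j+k} < t_{j+k'} (i.e., p is discarded at every shift), for a uniformly random text. Then |P_m(ℓ)| ≤ m! (1 − 1/ℓ!)^{⌈d/ℓ²⌉}. -/

import Mathlib

open Finset

def Agree {m : ℕ} (B : Finset (Fin m)) (f : Fin m → ℤ) (p : Equiv.Perm (Fin m)) : Prop :=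
  ∀ k ∈ B, ∀ k' ∈ B, f k < f k' → p k < p k'

lemma exists_agree {m : ℕ} (B : Finset (Fin m)) (f : Fin m → ℤ) (hf : Set.InjOn f B)
    (p : Equiv.Perm (Fin m)) :
    ∃ g : Equiv.Perm {x // x ∈ B}, Agree B f (p * Equiv.Perm.ofSubtype g) := by
  classical
  set F : Finset ℤ := B.image f with hF
  have hFcard : F.card = B.card := Finset.card_image_of_injOn hf
  set P : Finset (Fin m) := B.image (fun k => p k) with hP
  have hPcard : P.card = B.card := Finset.card_image_of_injOn (p.injective.injOn)
  have hmemF : ∀ k : {x // x ∈ B}, f ↑k ∈ F := fun k => Finset.mem_image_of_mem f k.2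
  have hmemP : ∀ k : {x // x ∈ B}, p ↑k ∈ P := fun k => Finset.mem_image_of_mem _ k.2
  set ef : {x // x ∈ B} → Fin B.card :=
    fun k => (F.orderIsoOfFin hFcard).symm ⟨f ↑k, hmemF k⟩ with hef
  set ep : {x // x ∈ B} → Fin B.card :=
    fun k => (P.orderIsoOfFin hPcard).symm ⟨p ↑k, hmemP k⟩ with hep
  have hefinj : Function.Injective ef := by
    intro a b h
    have := (F.orderIsoOfFin hFcard).symm.injective h
    have : f ↑a = f ↑b := congrArg Subtype.val this
    exact Subtype.ext (hf a.2 b.2 this)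
  have hepinj : Function.Injective ep := by
    intro a b h
    have := (P.orderIsoOfFin hPcard).symm.injective h
    have : p ↑a = p ↑b := congrArg Subtype.val this
    exact Subtype.ext (p.injective this)
  have hcard : Fintype.card {x // x ∈ B} = Fintype.card (Fin B.card) := by
    simp [Fintype.card_coe]
  have hefbij : Function.Bijective ef :=
    (Fintype.bijective_iff_injective_and_card ef).2 ⟨hefinj, hcard⟩
  have hepbij : Function.Bijective ep :=
    (Fintype.bijective_iff_injective_and_card ep).2 ⟨hepinj, hcard⟩
  set Ef := Equiv.ofBijective ef hefbij
  set Ep := Equiv.ofBijective ep hepbij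
  refine ⟨Ef.trans Ep.symm, ?_⟩
  intro k hk k' hk' hlt
  have h1 : (p * Equiv.Perm.ofSubtype (Ef.trans Ep.symm)) k
      = p ↑((Ef.trans Ep.symm) ⟨k, hk⟩) := by
    rw [Equiv.Perm.mul_apply, Equiv.Perm.ofSubtype_apply_of_mem _ hk]
  have h1' : (p * Equiv.Perm.ofSubtype (Ef.trans Ep.symm)) k'
      = p ↑((Ef.trans Ep.symm) ⟨k', hk'⟩) := by
    rw [Equiv.Perm.mul_apply, Equiv.Perm.ofSubtype_apply_of_mem _ hk']
  rw [h1, h1']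
  -- key: ep ((Ef.trans Ep.symm) K) = ef K
  have key : ∀ K : {x // x ∈ B}, ep ((Ef.trans Ep.symm) K) = ef K := by
    intro K
    show Ep (Ep.symm (Ef K)) = Ef K
    exact Ep.apply_symm_apply _
  have heflt : ef ⟨k, hk⟩ < ef ⟨k', hk'⟩ := by
    have : (⟨f k, hmemF ⟨k, hk⟩⟩ : {x // x ∈ F}) < ⟨f k', hmemF ⟨k', hk'⟩⟩ := hlt
    exact (F.orderIsoOfFin hFcard).symm.lt_iff_lt.mpr this
  have heplt : ep ((Ef.trans Ep.symm) ⟨k, hk⟩) < ep ((Ef.trans Ep.symm) ⟨k', hk'⟩) := by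
    rw [key, key]; exact heflt
  have := (P.orderIsoOfFin hPcard).symm.lt_iff_lt.mp heplt
  exact this

instance {m : ℕ} (B : Finset (Fin m)) (f : Fin m → ℤ) :
    DecidablePred (Agree B f) := fun p => by
  unfold Agree; infer_instance

lemma step_nat {m : ℕ} (B : Finset (Fin m)) (f : Fin m → ℤ) (hf : Set.InjOn f B)
    (Q : Equiv.Perm (Fin m) → Prop) [DecidablePred Q]
    (hQ : ∀ (p : Equiv.Perm (Fin m)) (g : Equiv.Perm {x // x ∈ B}),
      Q (p * Equiv.Perm.ofSubtype g) ↔ Q p) :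
    (Finset.univ.filter fun p : Equiv.Perm (Fin m) => Q p ∧ ¬ Agree B f p).card
        * B.card.factorial ≤
      (Finset.univ.filter fun p : Equiv.Perm (Fin m) => Q p).card
        * (B.card.factorial - 1) := by
  classical
  have hGcard : Fintype.card (Equiv.Perm {x // x ∈ B}) = B.card.factorial := by
    rw [Fintype.card_perm, Fintype.card_coe]
  have hcount_g : ∀ g : Equiv.Perm {x // x ∈ B},
      (Finset.univ.filter fun p : Equiv.Perm (Fin m) =>
        Q p ∧ ¬ Agree B f (p * Equiv.Perm.ofSubtype g)).card
      = (Finset.univ.filter fun p : Equiv.Perm (Fin m) => Q p ∧ ¬ Agree B f p).card := by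
    intro g
    refine Finset.card_bij'
      (fun p _ => p * Equiv.Perm.ofSubtype g)
      (fun p _ => p * (Equiv.Perm.ofSubtype g)⁻¹) ?_ ?_ ?_ ?_
    · intro p hp
      simp only [Finset.mem_filter, Finset.mem_univ, true_and] at hp ⊢
      exact ⟨(hQ p g).mpr hp.1, hp.2⟩
    · intro p hp
      simp only [Finset.mem_filter, Finset.mem_univ, true_and] at hp ⊢
      constructor
      · rw [← hQ (p * (Equiv.Perm.ofSubtype g)⁻¹) g, inv_mul_cancel_right]
        exact hp.1
      · rw [inv_mul_cancel_right]; exact hp.2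
    · intro p _; rw [mul_inv_cancel_right]
    · intro p _; rw [inv_mul_cancel_right]
  have hLHS :
      (Finset.univ.filter fun p : Equiv.Perm (Fin m) => Q p ∧ ¬ Agree B f p).card
          * B.card.factorial
        = ∑ g : Equiv.Perm {x // x ∈ B},
            (Finset.univ.filter fun p : Equiv.Perm (Fin m) =>
              Q p ∧ ¬ Agree B f (p * Equiv.Perm.ofSubtype g)).card := by
    rw [Finset.sum_congr rfl (fun g _ => hcount_g g), Finset.sum_const,
      Finset.card_univ, hGcard, smul_eq_mul, mul_comm]
  rw [hLHS]
  have hswap :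
      ∑ g : Equiv.Perm {x // x ∈ B},
          (Finset.univ.filter fun p : Equiv.Perm (Fin m) =>
            Q p ∧ ¬ Agree B f (p * Equiv.Perm.ofSubtype g)).card
        = ∑ p ∈ Finset.univ.filter (fun p : Equiv.Perm (Fin m) => Q p),
            (Finset.univ.filter fun g : Equiv.Perm {x // x ∈ B} =>
              ¬ Agree B f (p * Equiv.Perm.ofSubtype g)).card := by
    simp only [Finset.card_filter]
    rw [Finset.sum_comm]
    rw [Finset.sum_filter]
    refine Finset.sum_congr rfl (fun p _ => ?_)
    by_cases hQp : Q p <;> simp [hQp]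
  rw [hswap]
  refine (Finset.sum_le_card_nsmul _ _ (B.card.factorial - 1) (fun p _ => ?_)).trans ?_
  · have hex : ∃ g : Equiv.Perm {x // x ∈ B},
        Agree B f (p * Equiv.Perm.ofSubtype g) := exists_agree B f hf p
    have hpos : 0 < (Finset.univ.filter fun g : Equiv.Perm {x // x ∈ B} =>
        Agree B f (p * Equiv.Perm.ofSubtype g)).card := by
      obtain ⟨g, hg⟩ := hex
      exact Finset.card_pos.mpr ⟨g, by simp [hg]⟩
    have hsplit := Finset.card_filter_add_card_filter_not
      (s := (Finset.univ : Finset (Equiv.Perm {x // x ∈ B})))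
      (fun g => Agree B f (p * Equiv.Perm.ofSubtype g))
    rw [Finset.card_univ, hGcard] at hsplit
    omega
  · rw [smul_eq_mul]


lemma count_le {m ℓ : ℕ} (hl0 : 0 < ℓ) (B : ℕ → Finset (Fin m)) (f : ℕ → Fin m → ℤ)
    (S : Finset ℕ)
    (hB : ∀ j ∈ S, (B j).card ≤ ℓ)
    (hf : ∀ j ∈ S, Set.InjOn (f j) (B j))
    (hdisj : ∀ j ∈ S, ∀ j' ∈ S, j ≠ j' → Disjoint (B j) (B j')) :
    ((Finset.univ.filter fun p : Equiv.Perm (Fin m) =>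
        ∀ j ∈ S, ¬ Agree (B j) (f j) p).card : ℝ)
      ≤ (Nat.factorial m : ℝ) * (1 - 1 / (Nat.factorial ℓ : ℝ)) ^ S.card := by
  classical
  have hfacℓ : (1 : ℝ) ≤ (Nat.factorial ℓ : ℝ) := by
    exact_mod_cast Nat.one_le_iff_ne_zero.mpr (Nat.factorial_ne_zero ℓ)
  have hbase0 : (0 : ℝ) ≤ 1 - 1 / (Nat.factorial ℓ : ℝ) := by
    have : 1 / (Nat.factorial ℓ : ℝ) ≤ 1 := by
      rw [div_le_one (by linarith)]; linarith
    linarith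
  revert hB hf hdisj
  induction S using Finset.induction_on with
  | empty =>
    intro _ _ _
    simp only [Finset.notMem_empty, false_implies, implies_true, Finset.filter_true,
      Finset.card_univ, Finset.card_empty, pow_zero, mul_one]
    rw [Fintype.card_perm, Fintype.card_fin]
  | insert _ _ ha ih =>
    rename_i a S
    intro hB hf hdisj
    have hBS : ∀ j ∈ S, (B j).card ≤ ℓ := fun j hj => hB j (Finset.mem_insert_of_mem hj)
    have hfS : ∀ j ∈ S, Set.InjOn (f j) (B j) := fun j hj => hf j (Finset.mem_insert_of_mem hj)
    have hdS : ∀ j ∈ S, ∀ j' ∈ S, j ≠ j' → Disjoint (B j) (B j') :=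
      fun j hj j' hj' => hdisj j (Finset.mem_insert_of_mem hj) j' (Finset.mem_insert_of_mem hj')
    have IH := ih hBS hfS hdS
    have hfilter :
        (Finset.univ.filter fun p : Equiv.Perm (Fin m) =>
            ∀ j ∈ insert a S, ¬ Agree (B j) (f j) p)
          = Finset.univ.filter fun p : Equiv.Perm (Fin m) =>
              (∀ j ∈ S, ¬ Agree (B j) (f j) p) ∧ ¬ Agree (B a) (f a) p := by
      refine Finset.filter_congr (fun p _ => ?_)
      simp only [Finset.mem_insert]
      constructor
      · intro h; exact ⟨fun j hj => h j (Or.inr hj), h a (Or.inl rfl)⟩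
      · rintro ⟨h1, h2⟩ j hj
        rcases hj with rfl | hj
        · exact h2
        · exact h1 j hj
    rw [hfilter]
    set Q : Equiv.Perm (Fin m) → Prop := fun p => ∀ j ∈ S, ¬ Agree (B j) (f j) p with hQdef
    have hQinv : ∀ (p : Equiv.Perm (Fin m)) (g : Equiv.Perm {x // x ∈ B a}),
        Q (p * Equiv.Perm.ofSubtype g) ↔ Q p := by
      intro p g
      have hpt : ∀ j ∈ S, ∀ k ∈ B j, (p * Equiv.Perm.ofSubtype g) k = p k := by
        intro j hj k hk
        have hka : k ∉ B a := by
          have := hdisj a (Finset.mem_insert_self a S) j (Finset.mem_insert_of_mem hj)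
            (fun h => (h ▸ ha) hj)
          exact Finset.disjoint_left.mp this.symm hk
        rw [Equiv.Perm.mul_apply, Equiv.Perm.ofSubtype_apply_of_not_mem _ hka]
      constructor
      · intro h j hj hAg
        refine h j hj (fun k hk k' hk' hlt => ?_)
        rw [hpt j hj k hk, hpt j hj k' hk']
        exact hAg k hk k' hk' hlt
      · intro h j hj hAg
        refine h j hj (fun k hk k' hk' hlt => ?_)
        rw [← hpt j hj k hk, ← hpt j hj k' hk']
        exact hAg k hk k' hk' hlt
    have hstep := step_nat (B a) (f a) (hf a (Finset.mem_insert_self a S)) Q hQinv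
    have hfac_pos : (0 : ℝ) < ((B a).card.factorial : ℝ) := by
      exact_mod_cast Nat.factorial_pos _
    have hfacBa : ((B a).card.factorial : ℝ) ≤ (Nat.factorial ℓ : ℝ) := by
      exact_mod_cast Nat.factorial_le (hB a (Finset.mem_insert_self a S))
    have hreal :
        ((Finset.univ.filter fun p : Equiv.Perm (Fin m) =>
            Q p ∧ ¬ Agree (B a) (f a) p).card : ℝ)
          ≤ ((Finset.univ.filter fun p : Equiv.Perm (Fin m) => Q p).card : ℝ)
              * (1 - 1 / ((B a).card.factorial : ℝ)) := by
      have h1 : (((Finset.univ.filter fun p : Equiv.Perm (Fin m) =>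
            Q p ∧ ¬ Agree (B a) (f a) p).card : ℝ)) * ((B a).card.factorial : ℝ)
            ≤ ((Finset.univ.filter fun p : Equiv.Perm (Fin m) => Q p).card : ℝ)
                * (((B a).card.factorial : ℝ) - 1) := by
        have := hstep
        have h2 : (((B a).card.factorial - 1 : ℕ) : ℝ) = ((B a).card.factorial : ℝ) - 1 := by
          rw [Nat.cast_sub (Nat.one_le_iff_ne_zero.mpr (Nat.factorial_ne_zero _))]
          simp
        calc (((Finset.univ.filter fun p : Equiv.Perm (Fin m) =>
              Q p ∧ ¬ Agree (B a) (f a) p).card : ℝ)) * ((B a).card.factorial : ℝ)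
            = (((Finset.univ.filter fun p : Equiv.Perm (Fin m) =>
              Q p ∧ ¬ Agree (B a) (f a) p).card * (B a).card.factorial : ℕ) : ℝ) := by
              push_cast; ring
          _ ≤ (((Finset.univ.filter fun p : Equiv.Perm (Fin m) => Q p).card
                * ((B a).card.factorial - 1) : ℕ) : ℝ) := by exact_mod_cast hstep
          _ = ((Finset.univ.filter fun p : Equiv.Perm (Fin m) => Q p).card : ℝ)
                * (((B a).card.factorial : ℝ) - 1) := by push_cast [h2]; ring
      rw [← mul_le_mul_iff_of_pos_right hfac_pos]
      calc ((Finset.univ.filter fun p : Equiv.Perm (Fin m) =>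
              Q p ∧ ¬ Agree (B a) (f a) p).card : ℝ) * ((B a).card.factorial : ℝ)
          ≤ ((Finset.univ.filter fun p : Equiv.Perm (Fin m) => Q p).card : ℝ)
              * (((B a).card.factorial : ℝ) - 1) := h1
        _ = ((Finset.univ.filter fun p : Equiv.Perm (Fin m) => Q p).card : ℝ)
              * (1 - 1 / ((B a).card.factorial : ℝ)) * ((B a).card.factorial : ℝ) := by
            field_simp
    -- combine with IH
    have hbase_le : (1 - 1 / ((B a).card.factorial : ℝ)) ≤ 1 - 1 / (Nat.factorial ℓ : ℝ) := by
      have : 1 / (Nat.factorial ℓ : ℝ) ≤ 1 / ((B a).card.factorial : ℝ) :=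
        one_div_le_one_div_of_le hfac_pos hfacBa
      linarith
    have hbase0' : (0 : ℝ) ≤ 1 - 1 / ((B a).card.factorial : ℝ) := by
      have : 1 / ((B a).card.factorial : ℝ) ≤ 1 := by
        rw [div_le_one hfac_pos]
        exact_mod_cast Nat.one_le_iff_ne_zero.mpr (Nat.factorial_ne_zero _)
      linarith
    have hcardins : (insert a S).card = S.card + 1 := Finset.card_insert_of_notMem ha
    rw [hcardins, pow_succ, ← mul_assoc]
    have hQnn : (0 : ℝ) ≤ ((Finset.univ.filter fun p : Equiv.Perm (Fin m) => Q p).card : ℝ) :=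
      Nat.cast_nonneg _
    calc ((Finset.univ.filter fun p : Equiv.Perm (Fin m) =>
            Q p ∧ ¬ Agree (B a) (f a) p).card : ℝ)
        ≤ ((Finset.univ.filter fun p : Equiv.Perm (Fin m) => Q p).card : ℝ)
            * (1 - 1 / ((B a).card.factorial : ℝ)) := hreal
      _ ≤ ((Finset.univ.filter fun p : Equiv.Perm (Fin m) => Q p).card : ℝ)
            * (1 - 1 / (Nat.factorial ℓ : ℝ)) := by
          exact mul_le_mul_of_nonneg_left hbase_le hQnn
      _ ≤ (Nat.factorial m : ℝ) * (1 - 1 / (Nat.factorial ℓ : ℝ)) ^ S.card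
            * (1 - 1 / (Nat.factorial ℓ : ℝ)) := by
          exact mul_le_mul_of_nonneg_right IH hbase0

lemma greedy (K : ℕ) (R : ℕ → ℕ → Prop) [∀ a b : ℕ, Decidable (R a b)] (hsym : ∀ a b, R a b → R b a)
    (hrefl : ∀ a, R a a) :
    ∀ n (X : Finset ℕ), X.card ≤ n → (∀ j ∈ X, (X.filter (R j)).card ≤ K) →
      ∃ S, S ⊆ X ∧ (∀ j ∈ S, ∀ j' ∈ S, j ≠ j' → ¬ R j j') ∧ X.card ≤ S.card * K := by
  classical
  intro n
  induction n with
  | zero =>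
    intro X hX _
    refine ⟨∅, Finset.empty_subset _, by simp, ?_⟩
    simpa using hX
  | succ n ih =>
    intro X hX hcount
    rcases Finset.eq_empty_or_nonempty X with rfl | ⟨x, hx⟩
    · exact ⟨∅, Finset.empty_subset _, by simp, by simp⟩
    · set X' : Finset ℕ := X.filter (fun j => ¬ R x j) with hX'def
      have hxX' : x ∉ X' := by simp [hX'def, hrefl x]
      have hX'sub : X' ⊆ X := Finset.filter_subset _ _
      have hX'card : X'.card ≤ n := by
        have hlt : X'.card < X.card := Finset.card_lt_card ⟨hX'sub, fun h => hxX' (h hx)⟩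
        omega
      have hcount' : ∀ j ∈ X', (X'.filter (R j)).card ≤ K := by
        intro j hj
        exact le_trans (Finset.card_le_card (Finset.filter_subset_filter _ hX'sub))
          (hcount j (hX'sub hj))
      obtain ⟨S', hS'sub, hS'pair, hS'card⟩ := ih X' hX'card hcount'
      refine ⟨insert x S', ?_, ?_, ?_⟩
      · intro y hy
        rcases Finset.mem_insert.mp hy with rfl | hy
        · exact hx
        · exact hX'sub (hS'sub hy)
      · intro j hj j' hj' hne hR
        have hmem : ∀ y ∈ S', ¬ R x y := by
          intro y hy
          have := hS'sub hy
          rw [hX'def, Finset.mem_filter] at this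
          exact this.2
        rcases Finset.mem_insert.mp hj with hjx | hj <;>
          rcases Finset.mem_insert.mp hj' with hj'x | hj'
        · exact hne (hjx.trans hj'x.symm)
        · rw [hjx] at hR; exact hmem j' hj' hR
        · rw [hj'x] at hR; exact hmem j hj (hsym _ _ hR)
        · exact hS'pair j hj j' hj' hne hR
      · have hxS' : x ∉ S' := fun h => hxX' (hS'sub h)
        rw [Finset.card_insert_of_notMem hxS']
        have hXsplit : X.card = (X.filter (R x)).card + X'.card := by
          rw [hX'def]
          exact (Finset.card_filter_add_card_filter_not (R x)).symm
        have hK := hcount x hx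
        calc X.card = (X.filter (R x)).card + X'.card := hXsplit
          _ ≤ K + S'.card * K := by omega
          _ = (S'.card + 1) * K := by ring



/-- Counting lemma: with `ℓ` access positions `I` in a text window
of length `m + d` (positions `0,…,m+d-1`), the number of pattern permutations of
`[m]` discarded at every shift `j ∈ {0,…,d}` (i.e. exhibiting a mismatch with
the fixed text `t` on the accessed positions of the window at shift `j`) is at
most `m! (1 − 1/ℓ!)^⌈d/ℓ²⌉`. -/
theorem stmt_7 (m d ℓ : ℕ) (hm : 1 ≤ m) (hd : 1 ≤ d) (hl0 : 0 < ℓ) (hlm : ℓ ≤ m)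
    (I : Finset ℕ) (hI : I ⊆ Finset.range (m + d)) (hIcard : I.card = ℓ)
    (t : Fin (m + d) → ℤ) (ht : Function.Injective t) :
    (Set.ncard {p : Equiv.Perm (Fin m) |
        ∀ j ≤ d, ∃ k < m, ∃ k' < m, (j + k) ∈ I ∧ (j + k') ∈ I ∧
          ∃ (hk : k < m) (hk' : k' < m) (h1 : j + k < m + d) (h2 : j + k' < m + d),
            p ⟨k', hk'⟩ < p ⟨k, hk⟩ ∧ t ⟨j + k, h1⟩ < t ⟨j + k', h2⟩} : ℝ)
      ≤ (Nat.factorial m : ℝ) *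
          (1 - 1 / (Nat.factorial ℓ : ℝ)) ^ (Nat.ceil ((d : ℝ) / (ℓ : ℝ) ^ 2)) := by
  classical
  set B : ℕ → Finset (Fin m) :=
    fun j => Finset.univ.filter (fun k : Fin m => j + ↑k ∈ I) with hBdef
  set f : ℕ → Fin m → ℤ :=
    fun j k => if h : j + ↑k < m + d then t ⟨j + ↑k, h⟩ else 0 with hfdef
  set R : ℕ → ℕ → Prop :=
    fun j j' => ∃ ab : ℕ × ℕ, ab.1 ∈ I ∧ ab.2 ∈ I ∧ j' + ab.1 = j + ab.2 with hRdef
  have hInonempty : I.Nonempty := Finset.card_pos.mp (by rw [hIcard]; exact hl0)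
  have hsym : ∀ a b, R a b → R b a := by
    rintro a b ⟨⟨x, y⟩, hx, hy, hxy⟩
    exact ⟨(y, x), hy, hx, hxy.symm⟩
  have hrefl : ∀ a, R a a := by
    intro a
    obtain ⟨i, hi⟩ := hInonempty
    exact ⟨(i, i), hi, hi, rfl⟩
  set X : Finset ℕ := Finset.range (d + 1) with hXdef
  have hcount : ∀ j ∈ X, (X.filter (R j)).card ≤ ℓ ^ 2 := by
    intro j _
    have h1 : (X.filter (R j)).card ≤ (I ×ˢ I).card := by
      set F : ℕ → ℕ × ℕ := fun j' => if h : R j j' then h.choose else (0, 0) with hFdef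
      refine Finset.card_le_card_of_injOn F ?_ ?_
      · intro j' hj'
        have hR : R j j' := (Finset.mem_filter.mp hj').2
        have hspec := hR.choose_spec
        rw [hFdef]; simp only [dif_pos hR]
        exact Finset.mem_product.mpr ⟨hspec.1, hspec.2.1⟩
      · intro j1 hj1 j2 hj2 heq
        simp only [Finset.coe_filter, Set.mem_setOf_eq] at hj1 hj2
        have hR1 : R j j1 := hj1.2
        have hR2 : R j j2 := hj2.2
        have hs1 := hR1.choose_spec
        have hs2 := hR2.choose_spec
        rw [hFdef] at heq
        simp only [dif_pos hR1, dif_pos hR2] at heq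
        have h1 : j1 + (hR1.choose).1 = j + (hR1.choose).2 := hs1.2.2
        have h2 : j2 + (hR2.choose).1 = j + (hR2.choose).2 := hs2.2.2
        rw [heq] at h1
        omega
    rw [Finset.card_product, hIcard] at h1
    calc (X.filter (R j)).card ≤ ℓ * ℓ := h1
      _ = ℓ ^ 2 := (sq ℓ).symm
  obtain ⟨S, hSsub, hSpair, hScard⟩ :=
    greedy (ℓ ^ 2) R hsym hrefl X.card X le_rfl hcount
  -- basic facts about B and f on S
  have hjle : ∀ j ∈ S, j ≤ d := by
    intro j hj
    have := hSsub hj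
    rw [hXdef, Finset.mem_range] at this
    omega
  have hBcard : ∀ j ∈ S, (B j).card ≤ ℓ := by
    intro j _
    rw [← hIcard]
    refine Finset.card_le_card_of_injOn (fun k : Fin m => j + ↑k) ?_ ?_
    · intro k hk
      exact (Finset.mem_filter.mp hk).2
    · intro k _ k' _ h
      have h' : j + (k : ℕ) = j + (k' : ℕ) := h
      exact Fin.ext (by omega)
  have hflt : ∀ j ∈ S, ∀ k : Fin m, j + ↑k < m + d := by
    intro j hj k
    have := hjle j hj
    have := k.2
    omega
  have hfInj : ∀ j ∈ S, Set.InjOn (f j) (B j) := by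
    intro j hj k _ k' _ heq
    rw [hfdef] at heq
    simp only [dif_pos (hflt j hj k), dif_pos (hflt j hj k')] at heq
    have := ht heq
    have := Fin.mk.injEq .. ▸ this
    exact Fin.ext (by omega)
  have hdisj : ∀ j ∈ S, ∀ j' ∈ S, j ≠ j' → Disjoint (B j) (B j') := by
    intro j hj j' hj' hne
    rw [Finset.disjoint_left]
    intro k hk hk'
    have h1 : j + ↑k ∈ I := (Finset.mem_filter.mp hk).2
    have h2 : j' + ↑k ∈ I := (Finset.mem_filter.mp hk').2
    exact hSpair j hj j' hj' hne ⟨(j + ↑k, j' + ↑k), h1, h2, by omega⟩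
  -- set inclusion
  have hsubset : {p : Equiv.Perm (Fin m) |
        ∀ j ≤ d, ∃ k < m, ∃ k' < m, (j + k) ∈ I ∧ (j + k') ∈ I ∧
          ∃ (hk : k < m) (hk' : k' < m) (h1 : j + k < m + d) (h2 : j + k' < m + d),
            p ⟨k', hk'⟩ < p ⟨k, hk⟩ ∧ t ⟨j + k, h1⟩ < t ⟨j + k', h2⟩}
      ⊆ ↑(Finset.univ.filter fun p : Equiv.Perm (Fin m) =>
          ∀ j ∈ S, ¬ Agree (B j) (f j) p) := by
    intro p hp
    simp only [Finset.coe_filter, Set.mem_setOf_eq, Finset.mem_univ, true_and]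
    intro j hj hAg
    obtain ⟨k, hkm, k', hk'm, hkI, hk'I, hk2, hk'2, h1, h2, hplt, htlt⟩ := hp j (hjle j hj)
    have hkB : (⟨k, hkm⟩ : Fin m) ∈ B j := by
      rw [hBdef]; simp only [Finset.mem_filter, Finset.mem_univ, true_and]; exact hkI
    have hk'B : (⟨k', hk'm⟩ : Fin m) ∈ B j := by
      rw [hBdef]; simp only [Finset.mem_filter, Finset.mem_univ, true_and]; exact hk'I
    have hflt' : f j ⟨k, hkm⟩ < f j ⟨k', hk'm⟩ := by
      rw [hfdef]
      simp only [dif_pos h1, dif_pos h2]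
      exact htlt
    have := hAg _ hkB _ hk'B hflt'
    exact absurd this (not_lt.mpr (le_of_lt hplt))
  -- count
  have hcount_le := count_le hl0 B f S hBcard hfInj hdisj
  have hncard : (Set.ncard {p : Equiv.Perm (Fin m) |
        ∀ j ≤ d, ∃ k < m, ∃ k' < m, (j + k) ∈ I ∧ (j + k') ∈ I ∧
          ∃ (hk : k < m) (hk' : k' < m) (h1 : j + k < m + d) (h2 : j + k' < m + d),
            p ⟨k', hk'⟩ < p ⟨k, hk⟩ ∧ t ⟨j + k, h1⟩ < t ⟨j + k', h2⟩})
      ≤ (Finset.univ.filter fun p : Equiv.Perm (Fin m) =>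
          ∀ j ∈ S, ¬ Agree (B j) (f j) p).card := by
    rw [← Set.ncard_coe_finset]
    exact Set.ncard_le_ncard hsubset (Finset.finite_toSet _)
  -- exponent comparison
  have hl2pos : (0 : ℝ) < (ℓ : ℝ) ^ 2 := by positivity
  have hceil : Nat.ceil ((d : ℝ) / (ℓ : ℝ) ^ 2) ≤ S.card := by
    rw [Nat.ceil_le, div_le_iff₀ hl2pos]
    have : d + 1 ≤ S.card * ℓ ^ 2 := by
      rw [hXdef, Finset.card_range] at hScard
      exact hScard
    have hd' : (d : ℝ) ≤ (S.card * ℓ ^ 2 : ℕ) := by exact_mod_cast Nat.le_of_lt this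
    push_cast at hd' ⊢
    linarith
  have hfacℓ : (1 : ℝ) ≤ (Nat.factorial ℓ : ℝ) := by
    exact_mod_cast Nat.one_le_iff_ne_zero.mpr (Nat.factorial_ne_zero ℓ)
  have hbase0 : (0 : ℝ) ≤ 1 - 1 / (Nat.factorial ℓ : ℝ) := by
    have : 1 / (Nat.factorial ℓ : ℝ) ≤ 1 := by
      rw [div_le_one (by linarith)]; linarith
    linarith
  have hbase1 : 1 - 1 / (Nat.factorial ℓ : ℝ) ≤ 1 := by
    have : (0:ℝ) ≤ 1 / (Nat.factorial ℓ : ℝ) := by positivity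
    linarith
  have hpow : (1 - 1 / (Nat.factorial ℓ : ℝ)) ^ S.card
      ≤ (1 - 1 / (Nat.factorial ℓ : ℝ)) ^ (Nat.ceil ((d : ℝ) / (ℓ : ℝ) ^ 2)) :=
    pow_le_pow_of_le_one hbase0 hbase1 hceil
  calc (Set.ncard _ : ℝ)
      ≤ ((Finset.univ.filter fun p : Equiv.Perm (Fin m) =>
          ∀ j ∈ S, ¬ Agree (B j) (f j) p).card : ℝ) := by exact_mod_cast hncard
    _ ≤ (Nat.factorial m : ℝ) * (1 - 1 / (Nat.factorial ℓ : ℝ)) ^ S.card := hcount_le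
    _ ≤ (Nat.factorial m : ℝ) *
        (1 - 1 / (Nat.factorial ℓ : ℝ)) ^ (Nat.ceil ((d : ℝ) / (ℓ : ℝ) ^ 2)) := by
      exact mul_le_mul_of_nonneg_left hpow (by positivity)
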